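/- Let H(x) := ∫_{0}^{∞} Φ(u)·cos(xu) du. Then for every t > 0 one has ∫_{0}^{t} H(u) du = ∫_{0}^{∞} Φ(x)·(sin(xt)/x) dx > 0; in particular the average value of H on every interval [0, t], t > 0, is positive. -/

import Mathlib

open Real MeasureTheory Set

/-- The Jacobi theta kernel `Φ(t) := ∑_{n=1}^∞ π n² (2π n² e^{4t} − 3)·exp(5t − π n² e^{4t})`. -/
noncomputable def jacobiPhi (t : ℝ) : ℝ :=
  ∑' n : ℕ, Real.pi * ((n : ℝ) + 1) ^ 2 *
    (2 * Real.pi * ((n : ℝ) + 1) ^ 2 * Real.exp (4 * t) - 3) *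
    Real.exp (5 * t - Real.pi * ((n : ℝ) + 1) ^ 2 * Real.exp (4 * t))

/-- `H(x) := ∫₀^∞ Φ(u)·cos(xu) du`, so that `H(x) = ξ(x/2)/8`. -/
noncomputable def xiH (x : ℝ) : ℝ :=
  ∫ u in Set.Ioi (0 : ℝ), jacobiPhi u * Real.cos (x * u)

/-- One term of the Jacobi theta kernel series. -/
noncomputable def phiT (m : ℕ) (t : ℝ) : ℝ :=
  Real.pi * ((m : ℝ) + 1) ^ 2 *
    (2 * Real.pi * ((m : ℝ) + 1) ^ 2 * Real.exp (4 * t) - 3) *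
    Real.exp (5 * t - Real.pi * ((m : ℝ) + 1) ^ 2 * Real.exp (4 * t))

lemma jacobiPhi_eq (t : ℝ) : jacobiPhi t = ∑' m, phiT m t := rfl

lemma cube_le_exp {w : ℝ} (hw : 0 ≤ w) : w ^ 3 / 6 ≤ Real.exp w := by
  have h := Real.sum_le_exp_of_nonneg hw 4
  have : ∑ i ∈ Finset.range 4, w ^ i / i.factorial
      = 1 + w + w ^ 2 / 2 + w ^ 3 / 6 := by
    norm_num [Finset.sum_range_succ, Nat.factorial]
  rw [this] at h
  nlinarith [sq_nonneg w]

lemma one_le_M (m : ℕ) : (1 : ℝ) ≤ (m : ℝ) + 1 := by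
  have : (0:ℝ) ≤ (m:ℝ) := Nat.cast_nonneg m
  linarith

lemma phiT_pos {m : ℕ} {x : ℝ} (hx : 0 ≤ x) : 0 < phiT m x := by
  have hM : (1 : ℝ) ≤ (m : ℝ) + 1 := one_le_M m
  have hM2 : (1 : ℝ) ≤ ((m : ℝ) + 1) ^ 2 := by nlinarith
  have hpi := Real.pi_gt_three
  have hu1 : (1 : ℝ) ≤ Real.exp (4 * x) := Real.one_le_exp (by linarith)
  refine mul_pos (mul_pos (by positivity) ?_) (Real.exp_pos _)
  have k1 : 2 * Real.pi * ((m : ℝ) + 1) ^ 2 * 1 ≤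
      2 * Real.pi * ((m : ℝ) + 1) ^ 2 * Real.exp (4 * x) :=
    mul_le_mul_of_nonneg_left hu1 (by positivity)
  have k2 : 2 * Real.pi * 1 ≤ 2 * Real.pi * ((m : ℝ) + 1) ^ 2 :=
    mul_le_mul_of_nonneg_left hM2 (by positivity)
  nlinarith

lemma phiT_le {m : ℕ} {x : ℝ} (hx : 0 ≤ x) :
    phiT m x ≤ 32 * Real.exp (-((m : ℝ) + 1)) * Real.exp (-x) := by
  have hM : (1 : ℝ) ≤ (m : ℝ) + 1 := one_le_M m
  set M : ℝ := (m : ℝ) + 1 with hMdef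
  have hpi := Real.pi_gt_three
  have hu1 : (1 : ℝ) ≤ Real.exp (4 * x) := Real.one_le_exp (by linarith)
  have hu2 : 1 + 4 * x ≤ Real.exp (4 * x) := by
    have := Real.add_one_le_exp (4 * x); linarith
  set a : ℝ := Real.pi * M ^ 2 with hadef
  have haM : 3 * M ^ 2 ≤ a := by nlinarith [sq_nonneg M]
  have haMpos : 0 < a := by positivity
  have ha3 : 3 ≤ a := by nlinarith
  set z : ℝ := a * Real.exp (4 * x) with hzdef
  have hza : a ≤ z := le_mul_of_one_le_right haMpos.le hu1
  have hz3 : 3 ≤ z := le_trans ha3 hza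
  have hzl : 3 * M ^ 2 * (1 + 4 * x) ≤ z := by
    calc 3 * M ^ 2 * (1 + 4 * x) ≤ a * (1 + 4 * x) := by
          apply mul_le_mul_of_nonneg_right haM (by linarith)
      _ ≤ a * Real.exp (4 * x) := by
          apply mul_le_mul_of_nonneg_left hu2 haMpos.le
  have hphi : phiT m x = a * (2 * z - 3) * Real.exp (-(z / 2)) *
      (Real.exp (-(z / 2)) * Real.exp (5 * x)) := by
    rw [phiT, ← hMdef, ← hadef]
    rw [show (5 * x - a * Real.exp (4 * x)) = -(z / 2) + (-(z / 2) + 5 * x) by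
      rw [hzdef]; ring]
    rw [Real.exp_add, Real.exp_add]
    ring
  rw [hphi]
  have h1 : a * (2 * z - 3) ≤ 2 * z ^ 2 := by nlinarith
  have hep : (0 : ℝ) < Real.exp (-(z / 2)) := Real.exp_pos _
  have h2 : z ^ 2 * Real.exp (-(z / 2)) ≤ 16 := by
    have h3 : (z / 2) ^ 3 / 6 ≤ Real.exp (z / 2) := cube_le_exp (by linarith)
    rw [Real.exp_neg]
    rw [mul_inv_le_iff₀ (Real.exp_pos _)]
    nlinarith [Real.exp_pos (z / 2)]
  have h4 : Real.exp (-(z / 2)) * Real.exp (5 * x) ≤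
      Real.exp (-M) * Real.exp (-x) := by
    rw [← Real.exp_add, ← Real.exp_add]
    apply Real.exp_le_exp.2
    nlinarith [sq_nonneg M]
  calc a * (2 * z - 3) * Real.exp (-(z / 2)) * (Real.exp (-(z / 2)) * Real.exp (5 * x))
      ≤ 2 * z ^ 2 * Real.exp (-(z / 2)) * (Real.exp (-(z / 2)) * Real.exp (5 * x)) := by
        apply mul_le_mul_of_nonneg_right (mul_le_mul_of_nonneg_right h1 hep.le)
        positivity
    _ ≤ 32 * (Real.exp (-(z / 2)) * Real.exp (5 * x)) := by
        apply mul_le_mul_of_nonneg_right (by nlinarith) (by positivity)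
    _ ≤ 32 * (Real.exp (-M) * Real.exp (-x)) := by
        apply mul_le_mul_of_nonneg_left h4 (by norm_num)
    _ = 32 * Real.exp (-M) * Real.exp (-x) := by ring

lemma summable_expM : Summable (fun m : ℕ => Real.exp (-((m : ℝ) + 1))) := by
  have h : ∀ m : ℕ, Real.exp (-((m : ℝ) + 1)) = Real.exp (-1) * (Real.exp (-1)) ^ m := by
    intro m
    rw [← Real.exp_nat_mul]
    rw [← Real.exp_add]
    congr 1
    push_cast
    ring
  refine Summable.congr ?_ (fun m => (h m).symm)
  exact (summable_geometric_of_lt_one (Real.exp_pos _).le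
    (Real.exp_lt_one_iff.2 (by norm_num))).mul_left _

lemma tsum_expM_le : (∑' m : ℕ, Real.exp (-((m : ℝ) + 1))) ≤ 1 := by
  have hhalf : Real.exp (-1 : ℝ) ≤ 1 / 2 := by
    have h2 : (2:ℝ) ≤ Real.exp 1 := by have := Real.add_one_le_exp (1:ℝ); linarith
    have h3 : Real.exp (-1 : ℝ) * Real.exp 1 = 1 := by
      rw [← Real.exp_add]; norm_num
    nlinarith [Real.exp_pos (-1 : ℝ)]
  have hle : ∀ m : ℕ, Real.exp (-((m : ℝ) + 1)) ≤ (1 / 2 : ℝ) ^ (m + 1) := by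
    intro m
    have : Real.exp (-((m : ℝ) + 1)) = (Real.exp (-1)) ^ (m + 1) := by
      rw [← Real.exp_nat_mul]; congr 1; push_cast; ring
    rw [this]
    exact pow_le_pow_left₀ (Real.exp_pos _).le hhalf (m + 1)
  have hsum2 : Summable (fun m : ℕ => (1 / 2 : ℝ) ^ (m + 1)) := by
    simp_rw [pow_succ']
    exact (summable_geometric_of_lt_one (by norm_num) (by norm_num)).mul_left _
  calc (∑' m : ℕ, Real.exp (-((m : ℝ) + 1)))
      ≤ ∑' m : ℕ, (1 / 2 : ℝ) ^ (m + 1) := Summable.tsum_le_tsum hle summable_expM hsum2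
    _ = 1 := by
        simp_rw [pow_succ']
        rw [tsum_mul_left, tsum_geometric_of_lt_one (by norm_num) (by norm_num)]
        norm_num

lemma summable_phiT {x : ℝ} (hx : 0 ≤ x) : Summable (fun m => phiT m x) :=
  Summable.of_nonneg_of_le (fun m => (phiT_pos hx).le) (fun m => phiT_le hx)
    (((summable_expM.mul_left 32).mul_right _))

lemma jacobiPhi_nonneg {x : ℝ} (hx : 0 ≤ x) : 0 ≤ jacobiPhi x := by
  rw [jacobiPhi_eq]
  exact tsum_nonneg fun m => (phiT_pos hx).le

lemma jacobiPhi_le {x : ℝ} (hx : 0 ≤ x) : jacobiPhi x ≤ 32 * Real.exp (-x) := by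
  rw [jacobiPhi_eq]
  calc (∑' m, phiT m x) ≤ ∑' m : ℕ, 32 * Real.exp (-((m : ℝ) + 1)) * Real.exp (-x) := by
        apply Summable.tsum_le_tsum (fun m => phiT_le hx) (summable_phiT hx)
        exact (summable_expM.mul_left 32).mul_right _
    _ = ∑' m : ℕ, 32 * Real.exp (-x) * Real.exp (-((m : ℝ) + 1)) :=
        tsum_congr (fun m => by ring)
    _ = 32 * Real.exp (-x) * ∑' m : ℕ, Real.exp (-((m : ℝ) + 1)) := tsum_mul_left
    _ ≤ 32 * Real.exp (-x) * 1 := by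
        apply mul_le_mul_of_nonneg_left tsum_expM_le (by positivity)
    _ = 32 * Real.exp (-x) := by ring

lemma phiT_continuous (m : ℕ) : Continuous (phiT m) := by
  unfold phiT
  fun_prop

lemma jacobiPhi_contOn : ContinuousOn jacobiPhi (Ici 0) := by
  have : jacobiPhi = fun t => ∑' m, phiT m t := rfl
  rw [this]
  apply continuousOn_tsum (u := fun m : ℕ => 32 * Real.exp (-((m : ℝ) + 1)))
    (fun m => (phiT_continuous m).continuousOn) (summable_expM.mul_left 32)
  intro n x hx
  rw [Real.norm_eq_abs, abs_of_nonneg (phiT_pos hx).le]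
  calc phiT n x ≤ 32 * Real.exp (-((n : ℝ) + 1)) * Real.exp (-x) := phiT_le hx
    _ ≤ 32 * Real.exp (-((n : ℝ) + 1)) * 1 := by
        apply mul_le_mul_of_nonneg_left _ (by positivity)
        exact Real.exp_le_one_iff.2 (by simp only [mem_Ici] at hx; linarith)
    _ = 32 * Real.exp (-((n : ℝ) + 1)) := by ring

lemma jacobiPhi_integrableOn : IntegrableOn jacobiPhi (Ioi (0 : ℝ)) := by
  apply Integrable.mono' ((exp_neg_integrableOn_Ioi 0 (by norm_num : (0:ℝ) < 1)).const_mul 32)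
  · exact (jacobiPhi_contOn.mono Ioi_subset_Ici_self).aestronglyMeasurable measurableSet_Ioi
  · filter_upwards [ae_restrict_mem measurableSet_Ioi] with x hx
    rw [Real.norm_eq_abs, abs_of_nonneg (jacobiPhi_nonneg (le_of_lt hx))]
    calc jacobiPhi x ≤ 32 * Real.exp (-x) := jacobiPhi_le (le_of_lt hx)
      _ = 32 * Real.exp (-1 * x) := by norm_num

lemma hasDerivAt_phiT (m : ℕ) (x : ℝ) :
    HasDerivAt (phiT m)
      (Real.pi * ((m : ℝ) + 1) ^ 2 *
        Real.exp (5 * x - Real.pi * ((m : ℝ) + 1) ^ 2 * Real.exp (4 * x)) *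
        (30 * (Real.pi * ((m : ℝ) + 1) ^ 2 * Real.exp (4 * x)) -
          8 * (Real.pi * ((m : ℝ) + 1) ^ 2 * Real.exp (4 * x)) ^ 2 - 15)) x := by
  set a : ℝ := Real.pi * ((m : ℝ) + 1) ^ 2 with hadef
  have h4 : HasDerivAt (fun y : ℝ => Real.exp (4 * y)) (Real.exp (4 * x) * 4) x := by
    have : HasDerivAt (fun y : ℝ => 4 * y) 4 x := by
      simpa using (hasDerivAt_id x).const_mul (4 : ℝ)
    exact this.exp
  have h1 : HasDerivAt (fun y : ℝ => 2 * Real.pi * ((m : ℝ) + 1) ^ 2 * Real.exp (4 * y) - 3)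
      (2 * Real.pi * ((m : ℝ) + 1) ^ 2 * (Real.exp (4 * x) * 4)) x :=
    (h4.const_mul _).sub_const 3
  have h2 : HasDerivAt (fun y : ℝ => 5 * y - Real.pi * ((m : ℝ) + 1) ^ 2 * Real.exp (4 * y))
      (5 - Real.pi * ((m : ℝ) + 1) ^ 2 * (Real.exp (4 * x) * 4)) x := by
    have h5 : HasDerivAt (fun y : ℝ => 5 * y) 5 x := by
      simpa using (hasDerivAt_id x).const_mul (5 : ℝ)
    exact h5.sub (h4.const_mul _)
  have h3 := h2.exp
  have h6 := (h1.const_mul (Real.pi * ((m : ℝ) + 1) ^ 2)).mul h3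
  have h7 : phiT m = fun y => Real.pi * ((m : ℝ) + 1) ^ 2 *
      (2 * Real.pi * ((m : ℝ) + 1) ^ 2 * Real.exp (4 * y) - 3) *
      Real.exp (5 * y - Real.pi * ((m : ℝ) + 1) ^ 2 * Real.exp (4 * y)) := rfl
  rw [h7]
  exact h6.congr_deriv (by ring)

lemma phiT_div_strictAnti (m : ℕ) :
    StrictAntiOn (fun x => phiT m x / x) (Ioi (0 : ℝ)) := by
  apply strictAntiOn_of_deriv_neg (convex_Ioi 0)
  · exact (phiT_continuous m).continuousOn.div continuousOn_id
      (fun x hx => ne_of_gt hx)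
  · rw [interior_Ioi]
    intro x hx
    have hx0 : (0 : ℝ) < x := hx
    have hD := (hasDerivAt_phiT m x).div (hasDerivAt_id x) hx0.ne'
    simp only [id_eq] at hD
    rw [(show HasDerivAt (fun x => phiT m x / x) _ x from hD).deriv]
    apply div_neg_of_neg_of_pos _ (by positivity)
    -- numerator negative
    have hM : (1 : ℝ) ≤ (m : ℝ) + 1 := one_le_M m
    have hM2 : (1 : ℝ) ≤ ((m : ℝ) + 1) ^ 2 := by nlinarith
    have hpi1 := Real.pi_gt_d6
    have hpi2 := Real.pi_lt_d6
    set a : ℝ := Real.pi * ((m : ℝ) + 1) ^ 2 with hadef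
    have hapi : Real.pi ≤ a := le_mul_of_one_le_right Real.pi_pos.le hM2
    have hapos : 0 < a := by positivity
    set u : ℝ := Real.exp (4 * x) with hudef
    have hu1 : (1 : ℝ) ≤ u := Real.one_le_exp (by linarith)
    have hu2 : 1 + 4 * x ≤ u := by have := Real.add_one_le_exp (4 * x); linarith
    set z : ℝ := a * u with hzdef
    have hzpi : Real.pi ≤ z := le_trans hapi (le_mul_of_one_le_right hapos.le hu1)
    have hzx : Real.pi * (1 + 4 * x) ≤ z := by
      calc Real.pi * (1 + 4 * x) ≤ Real.pi * u := by
            apply mul_le_mul_of_nonneg_left hu2 Real.pi_pos.le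
        _ ≤ a * u := by apply mul_le_mul_of_nonneg_right hapi (by linarith)
    have hE : (0 : ℝ) < Real.exp (5 * x - a * u) := Real.exp_pos _
    set E : ℝ := Real.exp (5 * x - a * u) with hEdef
    -- key inequality : x * (30 z - 8 z^2 - 15) < 2 z - 3
    have key : x * (30 * z - 8 * z ^ 2 - 15) < 2 * z - 3 := by
      rcases le_or_gt (30 * z - 8 * z ^ 2 - 15) 0 with hQ | hQ
      · have h1 : x * (30 * z - 8 * z ^ 2 - 15) ≤ 0 :=
          mul_nonpos_of_nonneg_of_nonpos hx0.le hQ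
        nlinarith
      · have hz4 : z < 4 := by nlinarith
        have hx07 : x < 7 / 100 := by nlinarith
        have hQ3 : 30 * z - 8 * z ^ 2 - 15 ≤ 3 / 10 := by
          have h1 : 0 ≤ (z - Real.pi) * (8 * (z + Real.pi) - 30) := by
            apply mul_nonneg (by linarith)
            nlinarith
          nlinarith
        have h2 : x * (30 * z - 8 * z ^ 2 - 15) ≤ x * (3 / 10) :=
          mul_le_mul_of_nonneg_left hQ3 hx0.le
        nlinarith
    have hfT : phiT m x = a * (2 * z - 3) * E := by
      rw [phiT, ← hadef, hzdef, hudef, hEdef]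
      ring
    have goal_eq : a * E * (30 * z - 8 * z ^ 2 - 15) * x - phiT m x * 1
        = (a * E) * (x * (30 * z - 8 * z ^ 2 - 15) - (2 * z - 3)) := by
      rw [hfT]; ring
    calc Real.pi * ((m : ℝ) + 1) ^ 2 *
          Real.exp (5 * x - Real.pi * ((m : ℝ) + 1) ^ 2 * Real.exp (4 * x)) *
          (30 * (Real.pi * ((m : ℝ) + 1) ^ 2 * Real.exp (4 * x)) -
            8 * (Real.pi * ((m : ℝ) + 1) ^ 2 * Real.exp (4 * x)) ^ 2 - 15) * x -
          phiT m x * 1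
        = (a * E) * (x * (30 * z - 8 * z ^ 2 - 15) - (2 * z - 3)) := by
          rw [hfT, hEdef, hzdef, hudef, hadef]; ring
      _ < 0 := mul_neg_of_pos_of_neg (by positivity) (by linarith)

lemma q_strictAnti : StrictAntiOn (fun x => jacobiPhi x / x) (Ioi (0 : ℝ)) := by
  intro x hx y hy hxy
  have hx0 : (0 : ℝ) < x := hx
  have hy0 : (0 : ℝ) < y := hy
  simp only
  rw [jacobiPhi_eq, jacobiPhi_eq, ← tsum_div_const, ← tsum_div_const]
  apply Summable.tsum_lt_tsum_of_nonneg (i := 0)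
  · exact fun b => div_nonneg (phiT_pos hy0.le).le hy0.le
  · exact fun b => le_of_lt (phiT_div_strictAnti b hx hy hxy)
  · exact phiT_div_strictAnti 0 hx hy hxy
  · exact (summable_phiT hx0.le).div_const x

lemma sinc_cont : ContinuousOn (fun x : ℝ => Real.sin (x * t) / x) (Ioi (0:ℝ)) := by
  apply ContinuousOn.div
  · fun_prop
  · exact continuousOn_id
  · exact fun x hx => ne_of_gt hx

lemma integrand_integrableOn {t : ℝ} (ht : 0 < t) :
    IntegrableOn (fun x => jacobiPhi x * (Real.sin (x * t) / x)) (Ioi (0 : ℝ)) := by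
  apply Integrable.mono'
    (((exp_neg_integrableOn_Ioi 0 (by norm_num : (0:ℝ) < 1)).const_mul 32).mul_const t)
  · apply ContinuousOn.aestronglyMeasurable _ measurableSet_Ioi
    exact (jacobiPhi_contOn.mono Ioi_subset_Ici_self).mul sinc_cont
  · filter_upwards [ae_restrict_mem measurableSet_Ioi] with x hx
    have hx0 : (0 : ℝ) < x := hx
    rw [Real.norm_eq_abs, abs_mul]
    have h1 : |Real.sin (x * t) / x| ≤ t := by
      rw [abs_div, abs_of_pos hx0, div_le_iff₀ hx0]
      calc |Real.sin (x * t)| ≤ |x * t| := Real.abs_sin_le_abs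
        _ = t * x := by rw [abs_of_pos (by positivity)]; ring
    calc |jacobiPhi x| * |Real.sin (x * t) / x|
        ≤ (32 * Real.exp (-x)) * t := by
          apply mul_le_mul _ h1 (abs_nonneg _) (by positivity)
          rw [abs_of_nonneg (jacobiPhi_nonneg hx0.le)]
          exact jacobiPhi_le hx0.le
      _ = 32 * Real.exp (-1 * x) * t := by norm_num


lemma inner_cos_integral {t v : ℝ} (ht : 0 < t) (hv : 0 < v) :
    (∫ u in Ioc (0:ℝ) t, Real.cos (u * v)) = Real.sin (v * t) / v := by
  rw [← intervalIntegral.integral_of_le ht.le]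
  have hder : ∀ u ∈ Set.uIcc (0:ℝ) t,
      HasDerivAt (fun w => Real.sin (w * v) / v) (Real.cos (u * v)) u := by
    intro u _
    have h1 : HasDerivAt (fun w : ℝ => w * v) v u := hasDerivAt_mul_const v
    have h2 : HasDerivAt (fun w : ℝ => Real.sin (w * v)) (Real.cos (u * v) * v) u :=
      by have := (Real.hasDerivAt_sin (u * v)).comp u h1; exact this
    have h3 := h2.div_const v
    exact h3.congr_deriv (by field_simp)
  rw [intervalIntegral.integral_eq_sub_of_hasDerivAt hder]
  · simp [mul_comm]
  · apply Continuous.intervalIntegrable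
    fun_prop

lemma part1 {t : ℝ} (ht : 0 < t) :
    (∫ u in (0 : ℝ)..t, xiH u) =
      ∫ x in Ioi (0:ℝ), jacobiPhi x * (Real.sin (x * t) / x) := by
  haveI : IsFiniteMeasure (volume.restrict (Ioc (0:ℝ) t)) :=
    ⟨by rw [Measure.restrict_apply_univ]; exact measure_Ioc_lt_top⟩
  have hsm : AEStronglyMeasurable (fun p : ℝ × ℝ => jacobiPhi p.2 * Real.cos (p.1 * p.2))
      ((volume.restrict (Ioc (0:ℝ) t)).prod (volume.restrict (Ioi (0:ℝ)))) := by
    rw [Measure.prod_restrict]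
    refine ContinuousOn.aestronglyMeasurable ?_ (measurableSet_Ioc.prod measurableSet_Ioi)
    apply ContinuousOn.mul
    · apply jacobiPhi_contOn.comp continuous_snd.continuousOn
      intro p hp
      exact le_of_lt (show (0:ℝ) < p.2 from hp.2)
    · exact (Real.continuous_cos.comp (continuous_fst.mul continuous_snd)).continuousOn
  have hint : Integrable (Function.uncurry (fun u v => jacobiPhi v * Real.cos (u * v)))
      ((volume.restrict (Ioc (0:ℝ) t)).prod (volume.restrict (Ioi (0:ℝ)))) := by
    have hg0 : Integrable (fun v : ℝ => 32 * Real.exp (-v)) (volume.restrict (Ioi (0:ℝ))) := by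
      have := (exp_neg_integrableOn_Ioi 0 (by norm_num : (0:ℝ) < 1)).const_mul 32
      simpa using this
    have hg : Integrable (fun p : ℝ × ℝ => (1:ℝ) * (32 * Real.exp (-p.2)))
        ((volume.restrict (Ioc (0:ℝ) t)).prod (volume.restrict (Ioi (0:ℝ)))) :=
      (integrable_const (1:ℝ)).mul_prod hg0
    refine Integrable.mono' (by simpa using hg) hsm ?_
    rw [Measure.prod_restrict]
    filter_upwards [ae_restrict_mem (measurableSet_Ioc.prod measurableSet_Ioi)] with p hp
    have hp2 : (0:ℝ) < p.2 := hp.2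
    simp only [Function.uncurry]
    rw [Real.norm_eq_abs, abs_mul]
    calc |jacobiPhi p.2| * |Real.cos (p.1 * p.2)|
        ≤ (32 * Real.exp (-p.2)) * 1 := by
          apply mul_le_mul _ (Real.abs_cos_le_one _) (abs_nonneg _) (by positivity)
          rw [abs_of_nonneg (jacobiPhi_nonneg hp2.le)]
          exact jacobiPhi_le hp2.le
      _ = 32 * Real.exp (-p.2) := by ring
  calc (∫ u in (0 : ℝ)..t, xiH u)
      = ∫ u in Ioc (0:ℝ) t, ∫ v in Ioi (0:ℝ), jacobiPhi v * Real.cos (u * v) := by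
        rw [intervalIntegral.integral_of_le ht.le]; rfl
    _ = ∫ v in Ioi (0:ℝ), ∫ u in Ioc (0:ℝ) t, jacobiPhi v * Real.cos (u * v) :=
        MeasureTheory.integral_integral_swap hint
    _ = ∫ x in Ioi (0:ℝ), jacobiPhi x * (Real.sin (x * t) / x) := by
        refine setIntegral_congr_fun measurableSet_Ioi ?_
        intro v hv
        have hv0 : (0:ℝ) < v := hv
        show (∫ u in Ioc (0:ℝ) t, jacobiPhi v * Real.cos (u * v))
            = jacobiPhi v * (Real.sin (v * t) / v)
        rw [MeasureTheory.integral_const_mul, inner_cos_integral ht hv0]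


lemma part2 {t : ℝ} (ht : 0 < t) :
    0 < ∫ x in Ioi (0:ℝ), jacobiPhi x * (Real.sin (x * t) / x) := by
  set d : ℝ := Real.pi / t with hddef
  have hd : 0 < d := div_pos Real.pi_pos ht
  have hdt : d * t = Real.pi := div_mul_cancel₀ _ ht.ne'
  set h : ℝ → ℝ := fun x => jacobiPhi x * (Real.sin (x * t) / x) with hhdef
  set s : ℕ → Set ℝ := fun j => Ioc (2 * d * j) (2 * d * j + 2 * d) with hsdef
  have hU : (⋃ j, s j) = Ioi (0:ℝ) := by
    ext x
    simp only [mem_iUnion, hsdef, mem_Ioc, mem_Ioi]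
    constructor
    · rintro ⟨j, h1, h2⟩
      have hj : (0:ℝ) ≤ 2 * d * j := by positivity
      linarith
    · intro hx
      have hd2 : (0:ℝ) < 2 * d := by linarith
      set k : ℕ := Nat.ceil (x / (2 * d)) with hk
      have hk1 : 1 ≤ k := by
        rw [hk]
        rw [Nat.one_le_ceil_iff]
        positivity
      refine ⟨k - 1, ?_, ?_⟩
      · have h1 : ((k - 1 : ℕ) : ℝ) < x / (2 * d) := by
          apply Nat.lt_ceil.mp
          rw [← hk]
          omega
        have := (lt_div_iff₀ hd2).mp h1
        linarith
      · have h2 : x / (2 * d) ≤ (k : ℝ) := Nat.le_ceil _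
        have h3 : x ≤ 2 * d * k := by
          rw [div_le_iff₀ hd2] at h2
          linarith
        have h4 : ((k - 1 : ℕ) : ℝ) = (k : ℝ) - 1 := by
          push_cast [hk1]
          ring
        rw [h4]
        linarith [h3]
  have hdis : Pairwise (Function.onFun Disjoint s) := by
    intro i j hij
    simp only [Function.onFun, hsdef]
    rw [Set.Ioc_disjoint_Ioc]
    rcases hij.lt_or_gt with hlt | hlt
    · have hc : (i:ℝ) + 1 ≤ (j:ℝ) := by exact_mod_cast hlt
      refine le_trans (min_le_left _ _) (le_trans ?_ (le_max_right _ _))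
      nlinarith
    · have hc : (j:ℝ) + 1 ≤ (i:ℝ) := by exact_mod_cast hlt
      refine le_trans (min_le_right _ _) (le_trans ?_ (le_max_left _ _))
      nlinarith
  have hfi : IntegrableOn h (Ioi (0:ℝ)) := integrand_integrableOn ht
  have hHS : HasSum (fun j => ∫ x in s j, h x) (∫ x in Ioi (0:ℝ), h x) := by
    have := hasSum_integral_iUnion (fun j => measurableSet_Ioc) hdis
      (by rw [hU]; exact hfi)
    rwa [hU] at this
  have hII : ∀ a b : ℝ, 0 ≤ a → a ≤ b → IntervalIntegrable h volume a b := by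
    intro a b ha hab
    rw [intervalIntegrable_iff_integrableOn_Ioc_of_le hab]
    apply hfi.mono_set
    intro y hy
    exact lt_of_le_of_lt ha hy.1
  have hsin_eq : ∀ x : ℝ, Real.sin ((x + d) * t) = - Real.sin (x * t) := by
    intro x
    have he : (x + d) * t = x * t + Real.pi := by rw [add_mul, hdt]
    rw [he, Real.sin_add_pi]
  have hbracket : ∀ x : ℝ, 0 < x →
      h x + h (x + d) =
        Real.sin (x * t) * (jacobiPhi x / x - jacobiPhi (x + d) / (x + d)) := by
    intro x hx
    rw [hhdef]
    simp only
    rw [hsin_eq x]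
    have hx' : x ≠ 0 := hx.ne'
    have hxd : x + d ≠ 0 := by positivity
    field_simp
    ring
  have hsin_nonneg : ∀ j : ℕ, ∀ x : ℝ, 2 * d * j ≤ x → x ≤ 2 * d * j + d →
      0 ≤ Real.sin (x * t) := by
    intro j x h1 h2
    have e1 : Real.sin (x * t) = Real.sin (x * t - j * (2 * Real.pi)) := by
      have e2 := Real.sin_add_int_mul_two_pi (x * t - (j:ℝ) * (2 * Real.pi)) j
      push_cast at e2
      have e3 : x * t - (j:ℝ) * (2 * Real.pi) + (j:ℝ) * (2 * Real.pi) = x * t := by ring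
      rw [e3] at e2
      exact e2
    rw [e1]
    apply Real.sin_nonneg_of_nonneg_of_le_pi
    · have e4 : 2 * d * (j:ℝ) * t = (j:ℝ) * (2 * Real.pi) := by rw [← hdt]; ring
      nlinarith [mul_le_mul_of_nonneg_right h1 ht.le]
    · have e5 : (2 * d * (j:ℝ) + d) * t = (j:ℝ) * (2 * Real.pi) + Real.pi := by
        rw [← hdt]; ring
      nlinarith [mul_le_mul_of_nonneg_right h2 ht.le]
  have hpiece : ∀ j : ℕ, (∫ x in s j, h x)
      = ∫ x in (2*d*(j:ℝ))..(2*d*(j:ℝ)+d), (h x + h (x + d)) := by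
    intro j
    have hj0 : (0:ℝ) ≤ 2*d*(j:ℝ) := by positivity
    have hI1 : IntervalIntegrable h volume (2*d*(j:ℝ)) (2*d*(j:ℝ)+d) :=
      hII _ _ hj0 (by linarith)
    have hI2 : IntervalIntegrable h volume (2*d*(j:ℝ)+d) (2*d*(j:ℝ)+2*d) :=
      hII _ _ (by linarith) (by linarith)
    have hI2' : IntervalIntegrable (fun x => h (x + d)) volume (2*d*(j:ℝ)) (2*d*(j:ℝ)+d) := by
      have hc := hI2.comp_add_right d
      have e1 : 2*d*(j:ℝ) + d - d = 2*d*(j:ℝ) := by ring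
      have e2 : 2*d*(j:ℝ) + 2*d - d = 2*d*(j:ℝ) + d := by ring
      rwa [e1, e2] at hc
    calc (∫ x in s j, h x) = ∫ x in (2*d*(j:ℝ))..(2*d*(j:ℝ)+2*d), h x := by
          rw [intervalIntegral.integral_of_le (by linarith)]
      _ = (∫ x in (2*d*(j:ℝ))..(2*d*(j:ℝ)+d), h x)
            + ∫ x in (2*d*(j:ℝ)+d)..(2*d*(j:ℝ)+2*d), h x :=
          (intervalIntegral.integral_add_adjacent_intervals hI1 hI2).symm
      _ = (∫ x in (2*d*(j:ℝ))..(2*d*(j:ℝ)+d), h x)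
            + ∫ x in (2*d*(j:ℝ))..(2*d*(j:ℝ)+d), h (x + d) := by
          rw [intervalIntegral.integral_comp_add_right h d]
          congr 2 <;> ring
      _ = ∫ x in (2*d*(j:ℝ))..(2*d*(j:ℝ)+d), (h x + h (x + d)) :=
          (intervalIntegral.integral_add hI1 hI2').symm
  have hbound : ∀ j : ℕ, ∀ x ∈ Icc (2*d*(j:ℝ)) (2*d*(j:ℝ)+d), 0 ≤ h x + h (x + d) := by
    intro j x hx
    have hx0 : (0:ℝ) ≤ x := le_trans (by positivity) hx.1
    rcases hx0.eq_or_lt with he | hpos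
    · rw [← he]
      have h0 : h 0 = 0 := by rw [hhdef]; simp
      have hd0 : h (0 + d) = 0 := by
        rw [hhdef]
        simp only [zero_add]
        rw [hdt]
        simp
      rw [h0, hd0]
      norm_num
    · rw [hbracket x hpos]
      apply mul_nonneg (hsin_nonneg j x hx.1 hx.2)
      have hq := q_strictAnti (mem_Ioi.mpr hpos)
        (mem_Ioi.mpr (by linarith : (0:ℝ) < x + d)) (by linarith)
      simp only at hq
      linarith
  have hnn : ∀ j : ℕ, 0 ≤ ∫ x in s j, h x := by
    intro j
    rw [hpiece j]
    exact intervalIntegral.integral_nonneg (by linarith) (hbound j)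
  have hpos0 : 0 < ∫ x in s 0, h x := by
    rw [hpiece 0]
    simp only [Nat.cast_zero, mul_zero, zero_add]
    have hI1 : IntervalIntegrable h volume 0 d := hII 0 d le_rfl hd.le
    have hI2 : IntervalIntegrable h volume d (2*d) := hII _ _ hd.le (by linarith)
    have hI2' : IntervalIntegrable (fun x => h (x + d)) volume 0 d := by
      have hc := hI2.comp_add_right d
      have e1 : d - d = 0 := by ring
      have e2 : 2*d - d = d := by ring
      rwa [e1, e2] at hc
    apply intervalIntegral.intervalIntegral_pos_of_pos_on (hI1.add hI2') _ hd
    intro x hx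
    rw [hbracket x hx.1]
    apply mul_pos
    · apply Real.sin_pos_of_pos_of_lt_pi (mul_pos hx.1 ht)
      calc x * t < d * t := by
            apply mul_lt_mul_of_pos_right hx.2 ht
        _ = Real.pi := hdt
    · have hq := q_strictAnti (mem_Ioi.mpr hx.1)
        (mem_Ioi.mpr (by linarith [hx.1] : (0:ℝ) < x + d)) (by linarith)
      simp only at hq
      linarith
  have hle := le_hasSum hHS 0 (fun j _ => hnn j)
  exact lt_of_lt_of_le hpos0 hle

/-- **Remark 4.3 (b).** For every `t > 0`,
`∫₀ᵗ H(u) du = ∫₀^∞ Φ(x)·(sin(xt)/x) dx > 0`; in particular the average value of `H` on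
every interval `[0, t]`, `t > 0`, is positive. -/
theorem avg_H_pos :
    ∀ t : ℝ, 0 < t →
      (∫ u in (0 : ℝ)..t, xiH u) =
        (∫ x in Set.Ioi (0 : ℝ), jacobiPhi x * (Real.sin (x * t) / x)) ∧
      0 < ∫ x in Set.Ioi (0 : ℝ), jacobiPhi x * (Real.sin (x * t) / x) := by
  intro t ht
  exact ⟨part1 ht, part2 ht⟩
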